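/- Let σ > 1 and θ > σ − 1. Then [1 − σ/(1+θ) + (σ/(1+θ)) · ((σ−1)/σ)^{1+θ}] / [1 − (σ−1)/θ + ((σ−1)/θ) · ((σ−1)/σ)^{θ}] = θ/(1+θ). Equivalently, both bracketed expressions are positive and their ratio equals θ/(1+θ). -/

import Mathlib

/-- **Cost share of revenue in the Bertrand model.** For `σ > 1` and `θ > σ - 1`,
the cost-integral constant and the price(revenue)-integral constant are both
positive and their ratio equals `θ/(1+θ)`, so each source's profit is the
fraction `1/(1+θ)` of its sales revenue. -/
theorem profit_share_constant (σ θ : ℝ) (hσ : 1 < σ) (hθ : σ - 1 < θ) :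
    0 < 1 - σ / (1 + θ) + (σ / (1 + θ)) * ((σ - 1) / σ) ^ (1 + θ) ∧
    0 < 1 - (σ - 1) / θ + ((σ - 1) / θ) * ((σ - 1) / σ) ^ θ ∧
    (1 - σ / (1 + θ) + (σ / (1 + θ)) * ((σ - 1) / σ) ^ (1 + θ)) /
        (1 - (σ - 1) / θ + ((σ - 1) / θ) * ((σ - 1) / σ) ^ θ)
      = θ / (1 + θ) := by
  have hσ0 : 0 < σ := by linarith
  have hθ0 : 0 < θ := by linarith
  have h1θ : 0 < 1 + θ := by linarith
  set r : ℝ := (σ - 1) / σ with hr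
  have hr0 : 0 < r := div_pos (by linarith) hσ0
  have hr1 : r < 1 := by
    rw [hr, div_lt_one hσ0]; linarith
  have hrt0 : 0 < r ^ θ := Real.rpow_pos_of_pos hr0 θ
  have hrt1 : r ^ θ < 1 := Real.rpow_lt_one hr0.le hr1 hθ0
  have hsr : σ * r = σ - 1 := by
    rw [hr]; field_simp
  have hsplit : r ^ (1 + θ) = r * r ^ θ := by
    rw [Real.rpow_add hr0, Real.rpow_one]
  have hD : 0 < 1 - (σ - 1) / θ + ((σ - 1) / θ) * r ^ θ := by
    have h1 : (σ - 1) / θ < 1 := (div_lt_one hθ0).mpr hθ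
    have h2 : 0 < (σ - 1) / θ := div_pos (by linarith) hθ0
    nlinarith
  have key : (1 + θ) * (1 - σ / (1 + θ) + (σ / (1 + θ)) * r ^ (1 + θ))
      = θ * (1 - (σ - 1) / θ + ((σ - 1) / θ) * r ^ θ) := by
    rw [hsplit]
    field_simp
    nlinarith [hsr]
  have hN : 0 < 1 - σ / (1 + θ) + (σ / (1 + θ)) * r ^ (1 + θ) := by
    nlinarith
  refine ⟨hN, hD, ?_⟩
  rw [div_eq_div_iff (ne_of_gt hD) (ne_of_gt h1θ)]
  linarith [key]
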